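/- arXiv:1806.05514 — 9 statements merged into one kernel-verified Lean document; each statement's English description precedes it below -/
import Mathlib

section
/- Let D^X, D^Y be N×N real distance matrices with maximum entries m_X, m_Y respectively, and set K̂^X = m_X·J − D^X and K̂^Y = m_Y·J − D^Y. Then the biased sample distance covariance equals the biased sample HSIC computed from the bijective induced kernel matrices: (1/N²)·trace(H·D^X·H·H·D^Y·H) = (1/N²)·trace(H·K̂^X·H·H·K̂^Y·H), where H = I − (1/N)J. -/
/-- For `N × N` distance matrices `DX, DY` with maximum entries `mX, mY`
and bijective induced kernel matrices `K̂X = mX·J - DX`, `K̂Y = mY·J - DY`, the biased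
sample distance covariance equals the biased sample HSIC:
`(1/N²)·trace(H·DX·H·H·DY·H) = (1/N²)·trace(H·K̂X·H·H·K̂Y·H)`. -/
theorem stmt_11 (N : ℕ) (hN : 0 < N) (DX DY : Matrix (Fin N) (Fin N) ℝ)
    (mX mY : ℝ)
    (hmX : IsGreatest {r : ℝ | ∃ i j : Fin N, DX i j = r} mX)
    (hmY : IsGreatest {r : ℝ | ∃ i j : Fin N, DY i j = r} mY) :
    let J : Matrix (Fin N) (Fin N) ℝ := Matrix.of fun _ _ => 1
    let H : Matrix (Fin N) (Fin N) ℝ := 1 - (N : ℝ)⁻¹ • J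
    let KX : Matrix (Fin N) (Fin N) ℝ := mX • J - DX
    let KY : Matrix (Fin N) (Fin N) ℝ := mY • J - DY
    ((N : ℝ) ^ 2)⁻¹ * (H * DX * H * (H * DY * H)).trace =
      ((N : ℝ) ^ 2)⁻¹ * (H * KX * H * (H * KY * H)).trace := by
  intro J H KX KY
  have hNR : (N : ℝ) ≠ 0 := Nat.cast_ne_zero.mpr hN.ne'
  have hHJ : H * J = 0 := by
    ext i j
    simp only [H, J, Matrix.sub_mul, Matrix.smul_mul, Matrix.sub_apply,
      Matrix.smul_apply, Matrix.one_mul, Matrix.mul_apply, Matrix.of_apply,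
      Matrix.zero_apply, smul_eq_mul]
    simp [Matrix.one_apply, Finset.sum_ite_eq, hNR]
  have hKX : H * KX * H = -(H * DX * H) := by
    have : H * KX = -(H * DX) := by
      simp only [KX, Matrix.mul_sub, Matrix.mul_smul, hHJ, smul_zero, zero_sub]
    rw [this, Matrix.neg_mul]
  have hKY : H * KY * H = -(H * DY * H) := by
    have : H * KY = -(H * DY) := by
      simp only [KY, Matrix.mul_sub, Matrix.mul_smul, hHJ, smul_zero, zero_sub]
    rw [this, Matrix.neg_mul]
  rw [hKX, hKY, Matrix.neg_mul, Matrix.mul_neg, neg_neg]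
end

section
/- Let D^X, D^Y be N×N real distance matrices with maximum entries m_X, m_Y, and set K̂^X = m_X·J − D^X, K̂^Y = m_Y·J − D^Y. Write T(A,B) = trace(H·A·H·H·B·H) with H = I − (1/N)J. If T(D^X,D^X)·T(D^Y,D^Y) > 0, then the normalized statistics (sample distance correlation and normalized sample HSIC) coincide: T(D^X,D^Y)/√(T(D^X,D^X)·T(D^Y,D^Y)) = T(K̂^X,K̂^Y)/√(T(K̂^X,K̂^X)·T(K̂^Y,K̂^Y)). -/
lemma HJ_zero (N : ℕ) (hN : 0 < N) :
    ((1 : Matrix (Fin N) (Fin N) ℝ) - (N : ℝ)⁻¹ • Matrix.of fun _ _ => 1) *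
      (Matrix.of fun _ _ => (1:ℝ)) = 0 := by
  ext i j
  simp [Matrix.mul_apply, Matrix.sub_apply, Matrix.one_apply, Finset.sum_sub_distrib,
    Finset.sum_ite_eq, mul_comm]
  field_simp
  simp

/-- With `T(A,B) = trace(H·A·H·H·B·H)`, distance matrices `DX, DY` with
maximum entries `mX, mY`, and bijective induced kernels `K̂X = mX·J - DX`,
`K̂Y = mY·J - DY`: if `T(DX,DX)·T(DY,DY) > 0` then the sample distance correlation
equals the normalized sample HSIC:
`T(DX,DY)/√(T(DX,DX)·T(DY,DY)) = T(K̂X,K̂Y)/√(T(K̂X,K̂X)·T(K̂Y,K̂Y))`. -/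
theorem stmt_12 (N : ℕ) (hN : 0 < N) (DX DY : Matrix (Fin N) (Fin N) ℝ)
    (mX mY : ℝ)
    (hmX : IsGreatest {r : ℝ | ∃ i j : Fin N, DX i j = r} mX)
    (hmY : IsGreatest {r : ℝ | ∃ i j : Fin N, DY i j = r} mY) :
    let J : Matrix (Fin N) (Fin N) ℝ := Matrix.of fun _ _ => 1
    let H : Matrix (Fin N) (Fin N) ℝ := 1 - (N : ℝ)⁻¹ • J
    let KX : Matrix (Fin N) (Fin N) ℝ := mX • J - DX
    let KY : Matrix (Fin N) (Fin N) ℝ := mY • J - DY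
    let T : Matrix (Fin N) (Fin N) ℝ → Matrix (Fin N) (Fin N) ℝ → ℝ :=
      fun A B => (H * A * H * (H * B * H)).trace
    0 < T DX DX * T DY DY →
      T DX DY / Real.sqrt (T DX DX * T DY DY) =
        T KX KY / Real.sqrt (T KX KX * T KY KY) := by
  intro J H KX KY T _
  have hHJ : H * J = (0 : Matrix (Fin N) (Fin N) ℝ) := HJ_zero N hN
  have hK : ∀ (m : ℝ) (D : Matrix (Fin N) (Fin N) ℝ),
      H * (m • J - D) * H = -(H * D * H) := by
    intro m D
    have h1 : H * (m • J - D) = -(H * D) := by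
      rw [Matrix.mul_sub, Matrix.mul_smul, hHJ, smul_zero, zero_sub]
    rw [h1, Matrix.neg_mul]
  have hT : ∀ (m m' : ℝ) (D D' : Matrix (Fin N) (Fin N) ℝ),
      T (m • J - D) (m' • J - D') = T D D' := by
    intro m m' D D'
    show (H * (m • J - D) * H * (H * (m' • J - D') * H)).trace = _
    rw [hK, hK, Matrix.neg_mul, Matrix.mul_neg, neg_neg]
  show _ = T KX KY / Real.sqrt (T KX KX * T KY KY)
  rw [show T KX KY = T DX DY from hT mX mY DX DY,
    show T KX KX = T DX DX from hT mX mX DX DX,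
    show T KY KY = T DY DY from hT mY mY DY DY]
end

section
/- Let D^X, D^Y be N×N real distance matrices with maximum entries m_X, m_Y, set K̂^X = m_X·J − D^X, K̂^Y = m_Y·J − D^Y, and let P be any N×N permutation matrix. Then the permuted test statistics agree: trace(H·D^X·H·H·(P·D^Y·Pᵀ)·H) = trace(H·K̂^X·H·H·(P·K̂^Y·Pᵀ)·H). Consequently the permutation-test p-values of the sample distance covariance and of the sample HSIC with the bijective induced kernel are identical. -/
open Matrix

lemma aux_HJ (N : ℕ) (hN : 0 < N) :
    let J : Matrix (Fin N) (Fin N) ℝ := Matrix.of fun _ _ => 1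
    (1 - (N : ℝ)⁻¹ • J) * J = 0 := by
  intro J
  have hJJ : J * J = (N : ℝ) • J := by
    ext i j
    simp [J, Matrix.mul_apply, Matrix.smul_apply]
  have hNne : (N : ℝ) ≠ 0 := by positivity
  rw [Matrix.sub_mul, Matrix.one_mul, Matrix.smul_mul, hJJ, smul_smul,
    inv_mul_cancel₀ hNne, one_smul, sub_self]

lemma aux_JH (N : ℕ) (hN : 0 < N) :
    let J : Matrix (Fin N) (Fin N) ℝ := Matrix.of fun _ _ => 1
    J * (1 - (N : ℝ)⁻¹ • J) = 0 := by
  intro J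
  have hJJ : J * J = (N : ℝ) • J := by
    ext i j
    simp [J, Matrix.mul_apply, Matrix.smul_apply]
  have hNne : (N : ℝ) ≠ 0 := by positivity
  rw [Matrix.mul_sub, Matrix.mul_one, Matrix.mul_smul, hJJ, smul_smul,
    inv_mul_cancel₀ hNne, one_smul, sub_self]

/-- For distance matrices `DX, DY` with maximum entries `mX, mY`,
bijective induced kernels `K̂X = mX·J - DX`, `K̂Y = mY·J - DY`, and any permutation
matrix `P` (of a permutation `σ`), the permuted test statistics agree:
`trace(H·DX·H·H·(P·DY·Pᵀ)·H) = trace(H·K̂X·H·H·(P·K̂Y·Pᵀ)·H)`; hence the permutation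
p-values of distance covariance and HSIC with the bijective induced kernel coincide. -/
theorem stmt_13 (N : ℕ) (hN : 0 < N) (DX DY : Matrix (Fin N) (Fin N) ℝ)
    (mX mY : ℝ)
    (hmX : IsGreatest {r : ℝ | ∃ i j : Fin N, DX i j = r} mX)
    (hmY : IsGreatest {r : ℝ | ∃ i j : Fin N, DY i j = r} mY)
    (σ : Equiv.Perm (Fin N)) :
    let J : Matrix (Fin N) (Fin N) ℝ := Matrix.of fun _ _ => 1
    let H : Matrix (Fin N) (Fin N) ℝ := 1 - (N : ℝ)⁻¹ • J
    let KX : Matrix (Fin N) (Fin N) ℝ := mX • J - DX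
    let KY : Matrix (Fin N) (Fin N) ℝ := mY • J - DY
    let P : Matrix (Fin N) (Fin N) ℝ := σ.permMatrix ℝ
    (H * DX * H * (H * (P * DY * Pᵀ) * H)).trace =
      (H * KX * H * (H * (P * KY * Pᵀ) * H)).trace := by
  intro J H KX KY P
  have hHJ : H * J = 0 := aux_HJ N hN
  have hJH : J * H = 0 := aux_JH N hN
  have hPJ : P * J = J := by
    ext i j
    simp [P, J, Matrix.mul_apply, Equiv.Perm.permMatrix, PEquiv.toMatrix_apply,
      Equiv.toPEquiv_apply]
  have hJPT : J * Pᵀ = J := by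
    ext i j
    simp [P, J, Matrix.mul_apply, Matrix.transpose_apply, Equiv.Perm.permMatrix,
      PEquiv.toMatrix_apply, Equiv.toPEquiv_apply, Equiv.symm_apply_eq]
  have h1 : H * KX * H = -(H * DX * H) := by
    simp only [KX, Matrix.mul_sub, Matrix.sub_mul, Matrix.mul_smul, Matrix.smul_mul,
      hHJ, smul_zero, Matrix.zero_mul, zero_sub, neg_mul]
  have h2 : H * (P * KY * Pᵀ) * H = -(H * (P * DY * Pᵀ) * H) := by
    have : P * KY * Pᵀ = mY • J - P * DY * Pᵀ := by
      simp only [KY, Matrix.mul_sub, Matrix.sub_mul, Matrix.mul_smul, Matrix.smul_mul,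
        hPJ, hJPT]
    rw [this]
    simp only [Matrix.mul_sub, Matrix.sub_mul, Matrix.mul_smul, Matrix.smul_mul,
      hHJ, smul_zero, Matrix.zero_mul, zero_sub, Matrix.neg_mul]
  rw [h1, h2, Matrix.neg_mul, Matrix.mul_neg, neg_neg]
end

section
/- Let N ≥ 4, let D be an N×N real matrix with maximum entry 1, and let K̂ = J − D be its bijective induced kernel matrix. Let C denote the U-centered matrix of D and Ĉ the U-centered matrix of K̂. Then for all i ≠ j, Ĉ_{ij} = −(C_{ij} + 1/(N−1)), and Ĉ_{ii} = C_{ii} = 0 for all i; equivalently, Ĉ = −(C + (J − I)/(N−1)). -/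
/-- The U-centered matrix of an `N × N` real matrix `D`: for `i ≠ j`,
`C i j = D i j - (1/(N-2)) ∑_t D i t - (1/(N-2)) ∑_s D s j + (1/((N-1)(N-2))) ∑_{s,t} D s t`,
and `C i i = 0`. -/
noncomputable def uCenter {N : ℕ} (D : Matrix (Fin N) (Fin N) ℝ) :
    Matrix (Fin N) (Fin N) ℝ :=
  Matrix.of fun i j =>
    if i = j then 0
    else
      D i j - ((N : ℝ) - 2)⁻¹ * ∑ t, D i t - ((N : ℝ) - 2)⁻¹ * ∑ s, D s j +
        (((N : ℝ) - 1) * ((N : ℝ) - 2))⁻¹ * ∑ s, ∑ t, D s t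

/-- For `N ≥ 4`, an `N × N` matrix `D` with maximum entry `1`, and the
bijective induced kernel matrix `K̂ = J - D`, the U-centered matrices satisfy
`Ĉ i j = -(C i j + 1/(N-1))` for `i ≠ j`, `Ĉ i i = C i i = 0`, and equivalently
`Ĉ = -(C + (J - I)/(N-1))`. -/
theorem stmt_14 (N : ℕ) (hN : 4 ≤ N) (D : Matrix (Fin N) (Fin N) ℝ)
    (hmax : IsGreatest {r : ℝ | ∃ i j : Fin N, D i j = r} 1) :
    let J : Matrix (Fin N) (Fin N) ℝ := Matrix.of fun _ _ => 1
    let K : Matrix (Fin N) (Fin N) ℝ := J - D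
    let C := uCenter D
    let Chat := uCenter K
    (∀ i j : Fin N, i ≠ j → Chat i j = -(C i j + ((N : ℝ) - 1)⁻¹)) ∧
    (∀ i : Fin N, Chat i i = 0 ∧ C i i = 0) ∧
    Chat = -(C + ((N : ℝ) - 1)⁻¹ • (J - 1)) := by
  intro J K C Chat
  have hNr : (4:ℝ) ≤ (N:ℝ) := by exact_mod_cast hN
  have h1 : ((N:ℝ) - 1) ≠ 0 := by linarith
  have h2 : ((N:ℝ) - 2) ≠ 0 := by linarith
  have key : ∀ i j : Fin N, i ≠ j → Chat i j = -(C i j + ((N : ℝ) - 1)⁻¹) := by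
    intro i j hij
    show uCenter K i j = -(uCenter D i j + ((N : ℝ) - 1)⁻¹)
    simp only [uCenter, Matrix.of_apply, if_neg hij, K, J, Matrix.sub_apply,
      Matrix.of_apply, Finset.sum_sub_distrib, Finset.sum_const,
      Finset.card_univ, Fintype.card_fin, nsmul_eq_mul, mul_one]
    field_simp
    ring
  refine ⟨key, fun i => ⟨by simp [Chat, uCenter], by simp [C, uCenter]⟩, ?_⟩
  ext i j
  by_cases h : i = j
  · subst h
    simp [Chat, C, uCenter, Matrix.one_apply, J]
  · have hk := key i j h
    simp only [Matrix.neg_apply, Matrix.add_apply, Matrix.smul_apply,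
      Matrix.sub_apply, Matrix.one_apply_ne h, Matrix.of_apply, smul_eq_mul, J]
    rw [hk]; ring
end

section
/- Let N ≥ 4, let D^X, D^Y be N×N real matrices each with maximum entry 1, and let K̂^X = J − D^X, K̂^Y = J − D^Y. Let C^X, C^Y denote the U-centered matrices of D^X, D^Y and Ĉ^X, Ĉ^Y those of K̂^X, K̂^Y. Then the unbiased sample HSIC equals the unbiased sample distance covariance plus an explicit remainder: (1/(N(N−3)))·trace(Ĉ^X·Ĉ^Y) = (1/(N(N−3)))·trace(C^X·C^Y) + [ (N−1)·trace(C^X·(J−I)) + (N−1)·trace(C^Y·(J−I)) + trace((J−I)²) ] / (N·(N−1)²·(N−3)). -/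
lemma uCenter_one_sub {N : ℕ} (h1 : (N : ℝ) - 1 ≠ 0) (h2 : (N : ℝ) - 2 ≠ 0)
    (D : Matrix (Fin N) (Fin N) ℝ) :
    uCenter ((Matrix.of fun _ _ => (1 : ℝ)) - D) =
      -(uCenter D) - ((N : ℝ) - 1)⁻¹ • ((Matrix.of fun _ _ => (1 : ℝ)) - 1) := by
  ext i j
  simp only [uCenter, Matrix.of_apply, Matrix.sub_apply, Matrix.neg_apply,
    Matrix.smul_apply, Matrix.one_apply, smul_eq_mul]
  by_cases hij : i = j
  · simp [hij]
  · simp only [hij, if_false]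
    have hsum : ∀ f : Fin N → ℝ, ∑ t, ((1 : ℝ) - f t) = (N : ℝ) - ∑ t, f t := by
      intro f
      rw [Finset.sum_sub_distrib, Finset.sum_const, Finset.card_univ, Fintype.card_fin,
        nsmul_eq_mul, mul_one]
    simp only [Matrix.sub_apply, Matrix.of_apply, hsum]
    have htot : ∑ s, ((N : ℝ) - ∑ t, D s t) =
        (N : ℝ) * (N : ℝ) - ∑ s, ∑ t, D s t := by
      rw [Finset.sum_sub_distrib, Finset.sum_const, Finset.card_univ, Fintype.card_fin,
        nsmul_eq_mul]
    rw [htot]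
    field_simp
    ring

/-- For `N ≥ 4`, matrices `DX, DY` with maximum entry `1`, induced kernel
matrices `K̂X = J - DX`, `K̂Y = J - DY`, and U-centered matrices `CX, CY, ĈX, ĈY`, the
unbiased sample HSIC equals the unbiased sample distance covariance plus the explicit
remainder `((N-1)·tr(CX(J-I)) + (N-1)·tr(CY(J-I)) + tr((J-I)²)) / (N(N-1)²(N-3))`. -/
theorem stmt_15 (N : ℕ) (hN : 4 ≤ N) (DX DY : Matrix (Fin N) (Fin N) ℝ)
    (hmX : IsGreatest {r : ℝ | ∃ i j : Fin N, DX i j = r} 1)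
    (hmY : IsGreatest {r : ℝ | ∃ i j : Fin N, DY i j = r} 1) :
    let J : Matrix (Fin N) (Fin N) ℝ := Matrix.of fun _ _ => 1
    let KX : Matrix (Fin N) (Fin N) ℝ := J - DX
    let KY : Matrix (Fin N) (Fin N) ℝ := J - DY
    let CX := uCenter DX
    let CY := uCenter DY
    let CXhat := uCenter KX
    let CYhat := uCenter KY
    ((N : ℝ) * ((N : ℝ) - 3))⁻¹ * (CXhat * CYhat).trace =
      ((N : ℝ) * ((N : ℝ) - 3))⁻¹ * (CX * CY).trace +
        (((N : ℝ) - 1) * (CX * (J - 1)).trace +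
          ((N : ℝ) - 1) * (CY * (J - 1)).trace +
          ((J - 1) * (J - 1)).trace) /
          ((N : ℝ) * ((N : ℝ) - 1) ^ 2 * ((N : ℝ) - 3)) := by
  intro J KX KY CX CY CXhat CYhat
  have hN' : (4 : ℝ) ≤ (N : ℝ) := by exact_mod_cast hN
  have h0 : (N : ℝ) ≠ 0 := by linarith
  have h1 : (N : ℝ) - 1 ≠ 0 := by linarith
  have h2 : (N : ℝ) - 2 ≠ 0 := by linarith
  have h3 : (N : ℝ) - 3 ≠ 0 := by linarith
  have hX : CXhat = -CX - ((N : ℝ) - 1)⁻¹ • (J - 1) := uCenter_one_sub h1 h2 DX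
  have hY : CYhat = -CY - ((N : ℝ) - 1)⁻¹ • (J - 1) := uCenter_one_sub h1 h2 DY
  have hcomm : ((J - 1) * CY).trace = (CY * (J - 1)).trace := Matrix.trace_mul_comm _ _
  have hexp : (CXhat * CYhat).trace =
      (CX * CY).trace + ((N : ℝ) - 1)⁻¹ * (CX * (J - 1)).trace +
        ((N : ℝ) - 1)⁻¹ * (CY * (J - 1)).trace +
        ((N : ℝ) - 1)⁻¹ * ((N : ℝ) - 1)⁻¹ * ((J - 1) * (J - 1)).trace := by
    rw [hX, hY]
    simp only [sub_mul, mul_sub, neg_mul, mul_neg, neg_neg, Matrix.smul_mul,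
      Matrix.mul_smul, Matrix.trace_sub, Matrix.trace_neg, Matrix.trace_smul,
      smul_eq_mul, smul_smul]
    rw [Matrix.trace_mul_comm J CY, Matrix.trace_mul_comm (1 : Matrix (Fin N) (Fin N) ℝ) CY]
    ring
  rw [hexp]
  field_simp
  ring
end

section
/- Let N ≥ 4, let D^X, D^Y be N×N real matrices with maximum entry 1, K̂^X = J − D^X, K̂^Y = J − D^Y, and let C^X, C^Y and Ĉ^X, Ĉ^Y be the respective U-centered matrices. Then adding 1/(N−1) to all off-diagonal entries of the U-centered kernel matrices makes the unbiased statistics exactly equal: trace( (Ĉ^X + (J−I)/(N−1)) · (Ĉ^Y + (J−I)/(N−1)) ) = trace(C^X·C^Y). -/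
lemma uCenter_key {N : ℕ} (hN : 4 ≤ N) (D : Matrix (Fin N) (Fin N) ℝ) :
    uCenter ((Matrix.of fun _ _ => (1:ℝ)) - D) + ((N : ℝ) - 1)⁻¹ • ((Matrix.of fun _ _ => (1:ℝ)) - 1) = - uCenter D := by
  have hN1 : (N : ℝ) - 1 ≠ 0 := by
    have : (4:ℝ) ≤ N := by exact_mod_cast hN
    nlinarith
  have hN2 : (N : ℝ) - 2 ≠ 0 := by
    have : (4:ℝ) ≤ N := by exact_mod_cast hN
    nlinarith
  ext i j
  simp only [uCenter, Matrix.add_apply, Matrix.neg_apply, Matrix.smul_apply, Matrix.sub_apply,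
    Matrix.of_apply, Matrix.one_apply, Finset.sum_sub_distrib, Finset.sum_const,
    Finset.card_univ, Fintype.card_fin, nsmul_eq_mul, mul_one, smul_eq_mul]
  by_cases h : i = j
  · simp [h]
  · simp only [h, if_false]
    field_simp
    ring

/-- For `N ≥ 4`, matrices `DX, DY` with maximum entry `1`, induced kernel
matrices `K̂X = J - DX`, `K̂Y = J - DY`, and U-centered matrices `CX, CY, ĈX, ĈY`:
adding `1/(N-1)` to all off-diagonal entries of the U-centered kernel matrices makes
the unbiased statistics exactly equal:
`trace((ĈX + (J-I)/(N-1))·(ĈY + (J-I)/(N-1))) = trace(CX·CY)`. -/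
theorem stmt_16 (N : ℕ) (hN : 4 ≤ N) (DX DY : Matrix (Fin N) (Fin N) ℝ)
    (hmX : IsGreatest {r : ℝ | ∃ i j : Fin N, DX i j = r} 1)
    (hmY : IsGreatest {r : ℝ | ∃ i j : Fin N, DY i j = r} 1) :
    let J : Matrix (Fin N) (Fin N) ℝ := Matrix.of fun _ _ => 1
    let KX : Matrix (Fin N) (Fin N) ℝ := J - DX
    let KY : Matrix (Fin N) (Fin N) ℝ := J - DY
    let CX := uCenter DX
    let CY := uCenter DY
    let CXhat := uCenter KX
    let CYhat := uCenter KY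
    ((CXhat + ((N : ℝ) - 1)⁻¹ • (J - 1)) *
        (CYhat + ((N : ℝ) - 1)⁻¹ • (J - 1))).trace = (CX * CY).trace := by
  intro J KX KY CX CY CXhat CYhat
  have hX : CXhat + ((N : ℝ) - 1)⁻¹ • (J - 1) = -CX := uCenter_key hN DX
  have hY : CYhat + ((N : ℝ) - 1)⁻¹ • (J - 1) = -CY := uCenter_key hN DY
  rw [hX, hY, neg_mul_neg]
end

section
/- Let C be an N×N real matrix, J the all-ones matrix, I the identity matrix, and P any N×N permutation matrix. Then trace((Pᵀ·C·P)·(J − I)) = trace(C·(J − I)); consequently the remainder term separating the unbiased sample HSIC (with bijective induced kernel) from the unbiased sample distance covariance is invariant under permutation of the sample indices, so the two statistics yield the same permutation-test p-value. -/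
open Matrix

/-- For any `N × N` real matrix `C` and any permutation matrix `P`,
`trace((Pᵀ·C·P)·(J - I)) = trace(C·(J - I))`; hence the remainder term separating the
unbiased sample HSIC with the bijective induced kernel from the unbiased sample
distance covariance is permutation invariant, and the two statistics give the same
permutation-test p-value. -/
theorem stmt_17 (N : ℕ) (C : Matrix (Fin N) (Fin N) ℝ) (σ : Equiv.Perm (Fin N)) :
    let J : Matrix (Fin N) (Fin N) ℝ := Matrix.of fun _ _ => 1
    let P : Matrix (Fin N) (Fin N) ℝ := σ.permMatrix ℝ
    ((Pᵀ * C * P) * (J - 1)).trace = (C * (J - 1)).trace := by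
  intro J P
  have hPPT : P * Pᵀ = 1 := by
    rw [← PEquiv.toMatrix_symm, ← PEquiv.toMatrix_trans, ← Equiv.toPEquiv_symm,
      ← Equiv.toPEquiv_trans]
    simp
  have hPJ : P * J = J := by
    ext i j
    simp [J, P, Matrix.mul_apply, Equiv.Perm.permMatrix, PEquiv.toMatrix, Equiv.toPEquiv]
  have hJPT : J * Pᵀ = J := by
    have := congrArg Matrix.transpose hPJ
    simpa [Matrix.transpose_mul, show Jᵀ = J by ext i j; simp [J]] using this
  rw [mul_sub, mul_sub, mul_one, mul_one, trace_sub, trace_sub]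
  congr 1
  · rw [mul_assoc, mul_assoc, ← mul_assoc C, trace_mul_comm Pᵀ, mul_assoc (C*P), hJPT, mul_assoc, hPJ]
  · rw [mul_assoc, trace_mul_comm Pᵀ, mul_assoc, hPPT, mul_one]
end

section
/- Let K^X, K^Y be N×N real kernel matrices and let a, b ∈ ℝ be arbitrary scalars (in particular a and b may be the maximum entries of K^X and K^Y, defining the bijective induced distance matrices a·J − K^X and b·J − K^Y). Then trace(H·(a·J − K^X)·H·H·(b·J − K^Y)·H) = trace(H·K^X·H·H·K^Y·H), where H = I − (1/N)J; i.e., the maximum elements always cancel, so the sample distance covariance computed from the bijective induced metric equals the sample HSIC regardless of the (possibly growing) maximum elements. -/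
/-- For `N × N` kernel matrices `KX, KY` and arbitrary scalars `a, b`
(in particular the maximum entries defining the bijective induced distance matrices
`a·J - KX`, `b·J - KY`), the maximum elements always cancel:
`trace(H·(a·J - KX)·H·H·(b·J - KY)·H) = trace(H·KX·H·H·KY·H)`. -/
theorem stmt_18 (N : ℕ) (hN : 0 < N) (KX KY : Matrix (Fin N) (Fin N) ℝ) (a b : ℝ) :
    let J : Matrix (Fin N) (Fin N) ℝ := Matrix.of fun _ _ => 1
    let H : Matrix (Fin N) (Fin N) ℝ := 1 - (N : ℝ)⁻¹ • J
    (H * (a • J - KX) * H * (H * (b • J - KY) * H)).trace =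
      (H * KX * H * (H * KY * H)).trace := by
  intro J H
  have hNne : (N : ℝ) ≠ 0 := Nat.cast_ne_zero.mpr hN.ne'
  have hJJ : J * J = (N : ℝ) • J := by
    ext i j
    simp [J, Matrix.mul_apply]
  have hHJ : H * J = 0 := by
    show (1 - (N : ℝ)⁻¹ • J) * J = 0
    rw [Matrix.sub_mul, Matrix.one_mul, Matrix.smul_mul, hJJ, smul_smul,
      inv_mul_cancel₀ hNne, one_smul, sub_self]
  have h1 : H * (a • J - KX) = -(H * KX) := by
    rw [mul_sub, Matrix.mul_smul, hHJ, smul_zero, zero_sub]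
  have h2 : H * (b • J - KY) = -(H * KY) := by
    rw [mul_sub, Matrix.mul_smul, hHJ, smul_zero, zero_sub]
  rw [h1, h2]; simp [mul_neg, neg_mul]
end

section
/- Let (K^X_N)_{N≥1} and (K^Y_N)_{N≥1} be sequences of N×N real kernel matrices (the kernel matrices of growing samples), let a_N, b_N denote the maximum entries of K^X_N and K^Y_N, and define the induced distance matrices D̂^X_N = a_N·J_N − K^X_N and D̂^Y_N = b_N·J_N − K^Y_N. If the sample HSIC sequence Hsic_N = (1/N²)·trace(H_N·K^X_N·H_N·H_N·K^Y_N·H_N) converges to a limit L ∈ ℝ as N → ∞, then the sample distance covariance sequence computed from the induced metrics, Dcov_N = (1/N²)·trace(H_N·D̂^X_N·H_N·H_N·D̂^Y_N·H_N), also converges to L; in particular the population distance covariance with the bijective induced metric is well-defined and equals the population HSIC. -/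
/-- The `N × N` all-ones matrix. -/
noncomputable def onesMat (N : ℕ) : Matrix (Fin N) (Fin N) ℝ :=
  Matrix.of fun _ _ => 1

/-- The `N × N` centering matrix `H = I - (1/N)·J`. -/
noncomputable def centerMat (N : ℕ) : Matrix (Fin N) (Fin N) ℝ :=
  1 - (N : ℝ)⁻¹ • onesMat N

lemma centerMat_mul_ones (N : ℕ) (hN : 0 < N) : centerMat N * onesMat N = 0 := by
  ext i j
  simp only [centerMat, onesMat, Matrix.sub_mul, Matrix.smul_mul, Matrix.sub_apply,
    Matrix.one_mul, Matrix.smul_apply, Matrix.mul_apply, Matrix.of_apply, Matrix.zero_apply,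
    smul_eq_mul]
  simp only [mul_one, sub_mul, Finset.sum_sub_distrib, Matrix.one_apply, Finset.sum_ite_eq,
    Finset.mem_univ, if_true, Finset.sum_const, Finset.card_univ, Fintype.card_fin,
    nsmul_eq_mul]
  field_simp
  simp

lemma center_sandwich (N : ℕ) (hN : 0 < N) (c : ℝ) (K : Matrix (Fin N) (Fin N) ℝ) :
    centerMat N * (c • onesMat N - K) * centerMat N = -(centerMat N * K * centerMat N) := by
  rw [Matrix.mul_sub, Matrix.mul_smul, centerMat_mul_ones N hN]
  simp [Matrix.sub_mul]

/-- Let `KX N, KY N` be sequences of `N × N` kernel matrices with maximum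
entries `a N, b N`, and induced distance matrices `D̂X = a N · J - KX N`,
`D̂Y = b N · J - KY N`. If the sample HSIC sequence
`(1/N²)·trace(H·KX·H·H·KY·H)` converges to `L`, then the sample distance covariance
sequence computed from the induced metrics also converges to `L`. -/
theorem stmt_19 (KX KY : (N : ℕ) → Matrix (Fin N) (Fin N) ℝ) (a b : ℕ → ℝ)
    (ha : ∀ N : ℕ, 0 < N → IsGreatest {r : ℝ | ∃ i j : Fin N, KX N i j = r} (a N))
    (hb : ∀ N : ℕ, 0 < N → IsGreatest {r : ℝ | ∃ i j : Fin N, KY N i j = r} (b N))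
    (L : ℝ)
    (hconv : Filter.Tendsto
      (fun N : ℕ => ((N : ℝ) ^ 2)⁻¹ *
        (centerMat N * KX N * centerMat N *
          (centerMat N * KY N * centerMat N)).trace)
      Filter.atTop (nhds L)) :
    Filter.Tendsto
      (fun N : ℕ => ((N : ℝ) ^ 2)⁻¹ *
        (centerMat N * (a N • onesMat N - KX N) * centerMat N *
          (centerMat N * (b N • onesMat N - KY N) * centerMat N)).trace)
      Filter.atTop (nhds L) := by
  refine hconv.congr' ?_
  filter_upwards [Filter.eventually_ge_atTop 1] with N hN
  have h := center_sandwich N hN (a N) (KX N)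
  have h' := center_sandwich N hN (b N) (KY N)
  rw [h, h', neg_mul_neg]
end
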